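/- Let A be the 5×5 real matrix [[0,−a,2,2,−b],[−a,0,2,2,−b],[2,2,0,−a,2],[2,2,−a,0,2],[−b,−b,2,2,0]] with a, b > 0 and a > 4b. Then det A = 2a²(ab² + 4a − 16b) > 0. -/

import Mathlib

set_option maxHeartbeats 1000000


/-- The determinant of the explicit 5×5 matrix A equals 2a²(ab² + 4a − 16b),
which is positive when a, b > 0 and a > 4b. -/
theorem stmt16 (a b : ℝ) (ha : 0 < a) (hb : 0 < b) (hab : 4 * b < a) :
    (!![0, -a, 2, 2, -b;
        -a, 0, 2, 2, -b;
        2, 2, 0, -a, 2;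
        2, 2, -a, 0, 2;
        -b, -b, 2, 2, 0] : Matrix (Fin 5) (Fin 5) ℝ).det =
      2 * a ^ 2 * (a * b ^ 2 + 4 * a - 16 * b) ∧
    0 < (!![0, -a, 2, 2, -b;
        -a, 0, 2, 2, -b;
        2, 2, 0, -a, 2;
        2, 2, -a, 0, 2;
        -b, -b, 2, 2, 0] : Matrix (Fin 5) (Fin 5) ℝ).det := by
  have hdet : (!![0, -a, 2, 2, -b;
        -a, 0, 2, 2, -b;
        2, 2, 0, -a, 2;
        2, 2, -a, 0, 2;
        -b, -b, 2, 2, 0] : Matrix (Fin 5) (Fin 5) ℝ).det =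
      2 * a ^ 2 * (a * b ^ 2 + 4 * a - 16 * b) := by
    simp [Matrix.det_succ_row_zero, Fin.sum_univ_succ]
    simp (config := {decide := true}) [Fin.succAbove]
    ring
  refine ⟨hdet, hdet ▸ ?_⟩
  have h1 : 0 < a * b ^ 2 + 4 * a - 16 * b := by nlinarith
  positivity
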